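/- arXiv:1511.04218 — 6 statements merged into one kernel-verified Lean document; each statement's English description precedes it below -/
import Mathlib

section
/- Let N ≥ 1 be a natural number and λ̃ : Fin N → ℝ. Then the determinant of A_N(λ̃) equals 1 − Σ_{k=2}^{N} (k−1)·e_k(λ̃), where e_k(λ̃) = Σ_{S ⊆ Fin N, |S| = k} ∏_{i∈S} λ̃(i) is the k-th elementary symmetric polynomial of the values λ̃(1),…,λ̃(N). Explicitly: det(A_N(λ̃)) = 1 − Σ_{i<j} λ̃(i)λ̃(j) − 2 Σ_{i<j<k} λ̃(i)λ̃(j)λ̃(k) − 3 Σ_{i<j<k<l} λ̃(i)λ̃(j)λ̃(k)λ̃(l) − … − (N−1)·∏_{i} λ̃(i). -/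
open Finset Matrix

variable {N : ℕ} (lam : Fin N → ℝ)

def Bmat (s : Finset (Fin N)) : Matrix (Fin N) (Fin N) ℝ :=
  Matrix.of fun i j => if i ∈ s then (if i = j then (1 : ℝ) else 0) else 1

lemma Bmat_univ : (Bmat (univ : Finset (Fin N))).det = 1 := by
  have : Bmat (univ : Finset (Fin N)) = 1 := by
    ext i j; simp [Bmat, Matrix.one_apply]
  rw [this, Matrix.det_one]

lemma Bmat_erase (i₀ : Fin N) : (Bmat ((univ : Finset (Fin N)).erase i₀)).det = 1 := by
  have h1 : Bmat ((univ : Finset (Fin N)).erase i₀)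
      = Matrix.updateRow (1 : Matrix (Fin N) (Fin N) ℝ) i₀ (fun _ => 1) := by
    ext i j
    by_cases hi : i = i₀
    · subst hi; simp [Bmat]
    · simp [Bmat, Matrix.updateRow_ne hi, Matrix.one_apply, hi]
  have h2 : (fun _ : Fin N => (1 : ℝ))
      = ∑ k : Fin N, ((fun _ : Fin N => (1 : ℝ)) k) • (1 : Matrix (Fin N) (Fin N) ℝ) k := by
    funext j
    rw [Finset.sum_apply]
    simp [Matrix.one_apply]
  rw [h1, h2, Matrix.det_updateRow_sum]
  simp

lemma Bmat_small {s : Finset (Fin N)} (h : s.card + 2 ≤ N) : (Bmat s).det = 0 := by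
  have hcard : 1 < (sᶜ : Finset (Fin N)).card := by
    rw [Finset.card_compl]
    simp only [Fintype.card_fin]
    omega
  obtain ⟨a, ha, b, hb, hab⟩ := Finset.one_lt_card.mp hcard
  refine Matrix.det_zero_of_row_eq hab ?_
  funext j
  simp [Bmat, Finset.mem_compl.mp ha, Finset.mem_compl.mp hb]

lemma detA (hN : 1 ≤ N) :
    (Matrix.of fun i j : Fin N => if i = j then (1 : ℝ) else -lam i).det
      = ∏ i, (1 + lam i) - ∑ i, lam i * ∏ j ∈ univ.erase i, (1 + lam j) := by
  classical
  set m : Fin N → Fin N → ℝ := fun i j => if i = j then 1 + lam i else 0 with hm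
  set m' : Fin N → Fin N → ℝ := fun i _ => -lam i with hm'
  have hM : (Matrix.of fun i j : Fin N => if i = j then (1 : ℝ) else -lam i)
      = Matrix.of (m + m') := by
    ext i j
    simp only [Matrix.of_apply, Pi.add_apply, hm, hm']
    split_ifs <;> ring
  rw [hM]
  have expand : (Matrix.of (m + m')).det
      = ∑ s : Finset (Fin N), (Matrix.of (s.piecewise m m')).det :=
    Matrix.detRowAlternating.toMultilinearMap.map_add_univ m m'
  rw [expand]
  -- rewrite each term as a product of row scalings times `Bmat s`
  set c : Finset (Fin N) → Fin N → ℝ :=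
    fun s i => if i ∈ s then 1 + lam i else -lam i with hc
  have hterm : ∀ s : Finset (Fin N),
      (Matrix.of (s.piecewise m m')).det = (∏ i, c s i) * (Bmat s).det := by
    intro s
    rw [← Matrix.det_mul_column]
    congr 1
    ext i j
    by_cases hi : i ∈ s
    · simp only [Matrix.of_apply, Finset.piecewise_eq_of_mem _ _ _ hi, hm, hc, Bmat,
        if_pos hi, mul_ite, mul_one, mul_zero]
    · simp only [Matrix.of_apply, Finset.piecewise_eq_of_notMem _ _ _ hi, hm', hc, Bmat,
        if_neg hi, mul_one]
  simp_rw [hterm]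
  -- group by cardinality
  obtain ⟨n, rfl⟩ : ∃ n, N = n + 1 := ⟨N - 1, by omega⟩
  rw [← Finset.powerset_univ, Finset.powerset_card_disjiUnion]
  erw [Finset.sum_disjiUnion]
  have hcardu : (univ : Finset (Fin (n + 1))).card = n + 1 := by simp
  rw [hcardu, Finset.sum_range_succ, Finset.sum_range_succ]
  have hzero : ∀ k ∈ Finset.range n,
      ∑ s ∈ Finset.powersetCard k (univ : Finset (Fin (n + 1))),
        (∏ i, c s i) * (Bmat s).det = 0 := by
    intro k hk
    have hk' := Finset.mem_range.mp hk
    refine Finset.sum_eq_zero fun s hs => ?_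
    have hcs : s.card = k := (Finset.mem_powersetCard.mp hs).2
    rw [Bmat_small (by omega), mul_zero]
  rw [Finset.sum_eq_zero hzero, zero_add]
  -- top term : s = univ
  have htop : ∑ s ∈ Finset.powersetCard (n + 1) (univ : Finset (Fin (n + 1))),
      (∏ i, c s i) * (Bmat s).det = ∏ i, (1 + lam i) := by
    have hps : Finset.powersetCard (n + 1) (univ : Finset (Fin (n + 1))) = {univ} := by
      simpa using Finset.powersetCard_self (univ : Finset (Fin (n + 1)))
    rw [hps, Finset.sum_singleton, Bmat_univ, mul_one]
    exact Finset.prod_congr rfl fun i _ => by simp [hc]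
  -- second term : s = univ.erase i₀
  have hsec : ∑ s ∈ Finset.powersetCard n (univ : Finset (Fin (n + 1))),
      (∏ i, c s i) * (Bmat s).det
      = ∑ i, -(lam i * ∏ j ∈ univ.erase i, (1 + lam j)) := by
    refine (Finset.sum_bij (fun (i : Fin (n + 1)) _ => (univ : Finset (Fin (n + 1))).erase i)
      ?_ ?_ ?_ ?_).symm
    · intro a _
      rw [Finset.mem_powersetCard]
      exact ⟨Finset.subset_univ _, by simp [Finset.card_erase_of_mem]⟩
    · intro a _ b _ hab
      by_contra hne
      have : a ∈ (univ : Finset (Fin (n + 1))).erase b := Finset.mem_erase.mpr ⟨hne, by simp⟩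
      rw [← hab] at this
      exact (Finset.notMem_erase a _) this
    · intro s hs
      have hcs : s.card = n := (Finset.mem_powersetCard.mp hs).2
      have hcc : (sᶜ : Finset (Fin (n + 1))).card = 1 := by
        rw [Finset.card_compl, hcs]; simp
      obtain ⟨a, ha⟩ := Finset.card_eq_one.mp hcc
      refine ⟨a, Finset.mem_univ a, ?_⟩
      ext j
      simp only [Finset.mem_erase, Finset.mem_univ, and_true]
      rw [Ne, ← Finset.mem_singleton, ← ha, Finset.mem_compl, not_not]
    · intro a _
      rw [Bmat_erase, mul_one,
        ← Finset.mul_prod_erase (univ : Finset (Fin (n + 1))) (c _) (Finset.mem_univ a)]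
      have h1 : c (univ.erase a) a = -lam a := by simp [hc]
      have h2 : ∏ j ∈ univ.erase a, c (univ.erase a) j = ∏ j ∈ univ.erase a, (1 + lam j) :=
        Finset.prod_congr rfl fun j hj => by simp [hc, hj]
      rw [h1, h2]; ring
  rw [htop, hsec, Finset.sum_neg_distrib]
  ring

lemma prod_one_add (s : Finset (Fin N)) :
    ∏ i ∈ s, (1 + lam i) = ∑ t ∈ s.powerset, ∏ i ∈ t, lam i := by
  simp_rw [add_comm (1 : ℝ)]
  rw [Finset.prod_add]
  simp

lemma sum_card_prod :
    ∑ i, lam i * ∏ j ∈ univ.erase i, (1 + lam j)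
      = ∑ s ∈ (univ : Finset (Fin N)).powerset, (s.card : ℝ) * ∏ i ∈ s, lam i := by
  classical
  have h1 : ∑ i, lam i * ∏ j ∈ univ.erase i, (1 + lam j)
      = ∑ i, ∑ t ∈ (univ.erase i).powerset, ∏ j ∈ insert i t, lam j := by
    refine Finset.sum_congr rfl fun i _ => ?_
    rw [prod_one_add, Finset.mul_sum]
    refine Finset.sum_congr rfl fun t ht => ?_
    rw [Finset.prod_insert fun hit =>
      (Finset.notMem_erase i univ) (Finset.mem_powerset.mp ht hit)]
  have h2 : ∑ s ∈ (univ : Finset (Fin N)).powerset, (s.card : ℝ) * ∏ i ∈ s, lam i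
      = ∑ s ∈ (univ : Finset (Fin N)).powerset, ∑ _i ∈ s, ∏ j ∈ s, lam j := by
    refine Finset.sum_congr rfl fun s _ => ?_
    rw [Finset.sum_const, nsmul_eq_mul]
  rw [h1, h2, Finset.sum_sigma', Finset.sum_sigma']
  refine Finset.sum_nbij' (fun p => ⟨insert p.1 p.2, p.1⟩) (fun p => ⟨p.2, p.1.erase p.2⟩)
    ?_ ?_ ?_ ?_ ?_
  · rintro ⟨i, t⟩ ha
    simp only [Finset.mem_sigma] at ha ⊢
    exact ⟨Finset.mem_powerset.mpr (Finset.subset_univ _), Finset.mem_insert_self _ _⟩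
  · rintro ⟨s, i⟩ hb
    simp only [Finset.mem_sigma] at hb ⊢
    refine ⟨Finset.mem_univ _, Finset.mem_powerset.mpr ?_⟩
    exact Finset.erase_subset_erase _ (Finset.subset_univ _)
  · rintro ⟨i, t⟩ ha
    simp only [Finset.mem_sigma] at ha
    have hit : i ∉ t := fun h =>
      (Finset.notMem_erase i univ) (Finset.mem_powerset.mp ha.2 h)
    simp [Finset.erase_insert hit]
  · rintro ⟨s, i⟩ hb
    simp only [Finset.mem_sigma] at hb
    simp [Finset.insert_erase hb.2]
  · rintro ⟨i, t⟩ _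
    rfl
/-- Determinant expansion of the coupling matrix `A_N` in terms of
elementary symmetric polynomials of the concern rates. -/
theorem stmt_0 (N : ℕ) (hN : 1 ≤ N) (lam : Fin N → ℝ) :
    (Matrix.of fun i j : Fin N => if i = j then (1 : ℝ) else -lam i).det
      = 1 - ∑ k ∈ Finset.Icc 2 N, ((k : ℝ) - 1) *
          ∑ S ∈ Finset.powersetCard k (Finset.univ : Finset (Fin N)), ∏ i ∈ S, lam i := by
  classical
  rw [detA lam hN, prod_one_add lam univ, sum_card_prod lam, ← Finset.sum_sub_distrib]
  have hgroup : ∑ s ∈ (univ : Finset (Fin N)).powerset,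
        ((∏ i ∈ s, lam i) - (s.card : ℝ) * ∏ i ∈ s, lam i)
      = ∑ k ∈ Finset.range (N + 1), ((1 : ℝ) - k) *
          ∑ s ∈ Finset.powersetCard k (univ : Finset (Fin N)), ∏ i ∈ s, lam i := by
    rw [Finset.powerset_card_disjiUnion]
    erw [Finset.sum_disjiUnion]
    rw [Finset.card_fin]
    refine Finset.sum_congr rfl fun k hk => ?_
    rw [Finset.mul_sum]
    refine Finset.sum_congr rfl fun s hs => ?_
    rw [(Finset.mem_powersetCard.mp hs).2]
    ring
  rw [hgroup]
  have hrange : Finset.range (N + 1) = insert 0 (insert 1 (Finset.Icc 2 N)) := by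
    ext k
    simp only [Finset.mem_range, Finset.mem_insert, Finset.mem_Icc]
    omega
  rw [hrange, Finset.sum_insert (by simp), Finset.sum_insert (by simp)]
  rw [Finset.powersetCard_zero]
  simp only [Nat.cast_zero, Nat.cast_one, sub_self, zero_mul, sub_zero, mul_one,
    Finset.sum_singleton, Finset.prod_empty, one_mul]
  have hneg : ∀ k ∈ Finset.Icc 2 N,
      ((1 : ℝ) - k) * ∑ s ∈ Finset.powersetCard k (univ : Finset (Fin N)), ∏ i ∈ s, lam i
      = -(((k : ℝ) - 1) * ∑ s ∈ Finset.powersetCard k (univ : Finset (Fin N)), ∏ i ∈ s, lam i) :=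
    fun k _ => by ring
  rw [Finset.sum_congr rfl hneg, Finset.sum_neg_distrib]
  ring
end

section
/- Let N ≥ 2, fix an index a ∈ Fin N, and let λ̃ : Fin N → ℝ satisfy λ̃(b) ≥ 0 for all b ≠ a and λ̃(b₀) > 0 for at least one b₀ ≠ a. Then the map t ↦ det(A_N(λ̃')) is strictly decreasing in t ∈ ℝ, where λ̃' agrees with λ̃ at every index b ≠ a and λ̃'(a) = t. In other words, the determinant of A_N is strictly decreasing in each concern rate λ̃(a), provided some other agent has a strictly positive concern rate. -/
open Matrix Finset

lemma key_det {N : ℕ} (d w : Fin N → ℝ) (hd : ∀ i, d i ≠ 0) :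
    (Matrix.of fun i j : Fin N => (if i = j then d i else 0) - w i).det
      = (∏ i, d i) * (1 - ∑ i, w i / d i) := by
  have hm : (Matrix.of fun i j : Fin N => (if i = j then d i else 0) - w i)
      = Matrix.diagonal d *
        (1 + Matrix.replicateCol Unit (fun i => -(w i / d i)) * Matrix.replicateRow Unit (fun _ : Fin N => (1:ℝ))) := by
    ext i j
    rw [Matrix.diagonal_mul]
    simp only [Matrix.add_apply, Matrix.one_apply, Matrix.mul_apply, Matrix.replicateCol_apply,
      Matrix.replicateRow_apply, Finset.univ_unique, Finset.sum_const, Finset.card_singleton, one_smul,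
      Matrix.of_apply, mul_one]
    have h1 : d i * (w i / d i) = w i := by
      rw [mul_div_assoc', mul_comm, mul_div_assoc, div_self (hd i), mul_one]
    split_ifs with h
    · rw [mul_add, mul_one, mul_neg, h1, sub_eq_add_neg]
    · rw [zero_add, mul_neg, h1, zero_sub]
  rw [hm, Matrix.det_mul, Matrix.det_diagonal, Matrix.det_one_add_replicateCol_mul_replicateRow]
  simp [dotProduct, sub_eq_add_neg]

/-- The determinant of `A_N` is strictly decreasing in each concern rate,
provided some other agent has a strictly positive concern rate. -/
theorem stmt_1 (N : ℕ) (hN : 2 ≤ N) (a : Fin N) (lam : Fin N → ℝ)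
    (hnonneg : ∀ b, b ≠ a → 0 ≤ lam b) (hpos : ∃ b, b ≠ a ∧ 0 < lam b) :
    StrictAnti fun t : ℝ =>
      (Matrix.of fun i j : Fin N =>
        if i = j then (1 : ℝ) else -(Function.update lam a t i)).det := by
  -- value formula when all `1 + λ'_i ≠ 0`
  have hval : ∀ t : ℝ, (∀ i, (1:ℝ) + Function.update lam a t i ≠ 0) →
      (Matrix.of fun i j : Fin N =>
        if i = j then (1:ℝ) else -(Function.update lam a t i)).det
      = (∏ i, (1 + Function.update lam a t i)) *
        (1 - ∑ i, Function.update lam a t i / (1 + Function.update lam a t i)) := by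
    intro t ht
    have : (Matrix.of fun i j : Fin N =>
        if i = j then (1:ℝ) else -(Function.update lam a t i))
        = Matrix.of fun i j : Fin N =>
          (if i = j then (1 + Function.update lam a t i) else 0)
            - Function.update lam a t i := by
      ext i j; simp only [Matrix.of_apply]; split_ifs <;> ring
    rw [this, key_det _ _ ht]
  -- affinity in `t`
  set u : Fin N → ℝ := fun j => if a = j then 1 else 0 with hu
  set v : Fin N → ℝ := fun j => if a = j then 0 else -1 with hv
  set B := (Matrix.of fun i j : Fin N =>
    if i = j then (1:ℝ) else -(Function.update lam a 0 i)) with hB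
  have hM : ∀ t : ℝ, (Matrix.of fun i j : Fin N =>
      if i = j then (1:ℝ) else -(Function.update lam a t i))
      = B.updateRow a (u + t • v) := by
    intro t; ext i j
    by_cases hia : i = a
    · subst hia
      simp only [Matrix.of_apply, Matrix.updateRow_apply, if_pos rfl, Pi.add_apply,
        Pi.smul_apply, smul_eq_mul, hu, hv, Function.update_self]
      split_ifs with h <;> ring
    · rw [Matrix.updateRow_ne hia]
      simp [hB, Function.update_of_ne hia]
  set c0 := (B.updateRow a u).det with hc0
  set c1 := (B.updateRow a v).det with hc1
  have hf : ∀ t : ℝ, (Matrix.of fun i j : Fin N =>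
      if i = j then (1:ℝ) else -(Function.update lam a t i)).det = c0 + t * c1 := by
    intro t
    rw [hM t, Matrix.det_updateRow_add, Matrix.det_updateRow_smul]
  set P := ∏ i ∈ ({a}ᶜ : Finset (Fin N)), (1 + lam i) with hPdef
  set S := ∑ i ∈ ({a}ᶜ : Finset (Fin N)), lam i / (1 + lam i) with hSdef
  have hmem : ∀ i ∈ ({a}ᶜ : Finset (Fin N)), i ≠ a := by
    intro i hi; simpa using hi
  have hpos1 : ∀ i ∈ ({a}ᶜ : Finset (Fin N)), (0:ℝ) < 1 + lam i := by
    intro i hi; have := hnonneg i (hmem i hi); linarith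
  have hP : ∀ t : ℝ, ∏ i, (1 + Function.update lam a t i) = (1 + t) * P := by
    intro t
    rw [Fintype.prod_eq_mul_prod_compl a]
    congr 1
    · rw [Function.update_self]
    · exact Finset.prod_congr rfl fun i hi => by rw [Function.update_of_ne (hmem i hi)]
  have hS : ∀ t : ℝ, ∑ i, Function.update lam a t i / (1 + Function.update lam a t i)
      = t / (1 + t) + S := by
    intro t
    rw [Fintype.sum_eq_add_sum_compl a]
    congr 1
    · rw [Function.update_self]
    · exact Finset.sum_congr rfl fun i hi => by rw [Function.update_of_ne (hmem i hi)]
  have hne : ∀ (t : ℝ), (1:ℝ) + t ≠ 0 → ∀ i, (1:ℝ) + Function.update lam a t i ≠ 0 := by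
    intro t ht i
    by_cases h : i = a
    · subst h; rwa [Function.update_self]
    · rw [Function.update_of_ne h]; exact ne_of_gt (hpos1 i (by simpa using h))
  have e0 := hval 0 (hne 0 (by norm_num))
  have e1 := hval 1 (hne 1 (by norm_num))
  rw [hf 0, hP 0, hS 0] at e0
  rw [hf 1, hP 1, hS 1] at e1
  norm_num at e0 e1
  have hPpos : 0 < P := Finset.prod_pos hpos1
  have hSpos : 0 < S := by
    obtain ⟨b, hba, hb⟩ := hpos
    have hbmem : b ∈ ({a}ᶜ : Finset (Fin N)) := by simpa using hba
    refine Finset.sum_pos' (fun i hi => ?_) ⟨b, hbmem, ?_⟩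
    · exact div_nonneg (hnonneg i (hmem i hi)) (le_of_lt (hpos1 i hi))
    · exact div_pos hb (hpos1 b hbmem)
  have hc1neg : c1 < 0 := by nlinarith [mul_pos hPpos hSpos]
  intro x y hxy
  simp only []
  rw [hf x, hf y]
  nlinarith
end

section
/- Let N ≥ 2 be a natural number and λ : Fin N → ℝ be concern rates with 0 ≤ λ(a) ≤ 1 for every a and ∏_{a} λ(a) < 1. Set λ̃(a) := λ(a)/(N−1). Then det(A_N(λ̃)) > 0; in particular the matrix A_N(λ̃) is invertible. -/
/-- Under the standing assumption on the concern rates (all in `[0,1]` with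
product `< 1`), the matrix `A_N` has strictly positive determinant and is invertible. -/
theorem stmt_2 (N : ℕ) (hN : 2 ≤ N) (lam : Fin N → ℝ)
    (h0 : ∀ a, 0 ≤ lam a) (h1 : ∀ a, lam a ≤ 1) (hprod : ∏ a, lam a < 1) :
    0 < (Matrix.of fun i j : Fin N =>
          if i = j then (1 : ℝ) else -(lam i / ((N : ℝ) - 1))).det ∧
    IsUnit (Matrix.of fun i j : Fin N =>
          if i = j then (1 : ℝ) else -(lam i / ((N : ℝ) - 1))) := by
  have hN1 : (1 : ℝ) < (N : ℝ) := by exact_mod_cast lt_of_lt_of_le one_lt_two (by exact_mod_cast hN)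
  have hNpos : (0 : ℝ) < (N : ℝ) - 1 := by linarith
  set t : Fin N → ℝ := fun i => lam i / ((N : ℝ) - 1) with ht
  have ht0 : ∀ i, 0 ≤ t i := fun i => div_nonneg (h0 i) hNpos.le
  have htle : ∀ i, t i ≤ 1 / ((N : ℝ) - 1) := fun i => by
    exact div_le_div_of_nonneg_right (h1 i) hNpos.le
  set d : Fin N → ℝ := fun i => 1 + t i with hd
  have hdpos : ∀ i, 0 < d i := fun i => by have := ht0 i; simp [hd]; linarith
  set A : Matrix (Fin N) (Fin N) ℝ := Matrix.of fun i j : Fin N =>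
          if i = j then (1 : ℝ) else -(lam i / ((N : ℝ) - 1)) with hA
  have hfac : A = Matrix.diagonal d *
      (1 + Matrix.replicateCol Unit (fun i => -(t i) / d i) * Matrix.replicateRow Unit (fun _ => (1:ℝ))) := by
    ext i j
    have hdi := (hdpos i).ne'
    rw [Matrix.diagonal_mul, Matrix.add_apply, Matrix.mul_apply]
    rcases eq_or_ne i j with h | h
    · subst h
      simp [hA, Matrix.one_apply, Matrix.replicateCol_apply, Matrix.replicateRow_apply]
      field_simp
      simp [hd]
    · simp only [hA, Matrix.of_apply, if_neg h, Matrix.one_apply_ne h, Matrix.replicateCol_apply,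
        Matrix.replicateRow_apply, Finset.univ_unique, Finset.sum_singleton, mul_one, zero_add]
      rw [mul_div_assoc', mul_div_cancel_left₀ _ hdi]
  have hsum : ∑ i, t i / d i < 1 := by
    obtain ⟨a, ha⟩ : ∃ a, lam a < 1 := by
      by_contra h
      push_neg at h
      have : ∏ a, lam a = 1 := Finset.prod_eq_one fun a _ => le_antisymm (h1 a) (h a)
      linarith
    have key : ∀ i, lam i ≤ 1 → t i / d i ≤ 1 / N := by
      intro i hi
      rw [div_le_div_iff₀ (hdpos i) (by linarith)]
      have : t i * ((N:ℝ) - 1) ≤ 1 := by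
        rw [ht]; rw [div_mul_cancel₀ _ hNpos.ne']; exact hi
      simp [hd]; nlinarith [ht0 i]
    have keystrict : t a / d a < 1 / N := by
      rw [div_lt_div_iff₀ (hdpos a) (by linarith)]
      have : t a * ((N:ℝ) - 1) < 1 := by
        rw [ht]; rw [div_mul_cancel₀ _ hNpos.ne']; exact ha
      simp [hd]; nlinarith [ht0 a]
    calc ∑ i, t i / d i < ∑ _i : Fin N, (1:ℝ)/N :=
          Finset.sum_lt_sum (fun i _ => key i (h1 i)) ⟨a, Finset.mem_univ a, keystrict⟩
      _ = 1 := by simp; field_simp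
  have hdet : A.det = (∏ i, d i) * (1 - ∑ i, t i / d i) := by
    rw [hfac, Matrix.det_mul, Matrix.det_diagonal, Matrix.det_one_add_replicateCol_mul_replicateRow]
    congr 1
    rw [dotProduct]
    simp [neg_div, sub_eq_add_neg, Finset.sum_neg_distrib]
  have hpos : 0 < A.det := by
    rw [hdet]
    exact mul_pos (Finset.prod_pos fun i _ => hdpos i) (by linarith)
  exact ⟨hpos, (Matrix.isUnit_iff_isUnit_det A).mpr (isUnit_iff_ne_zero.mpr hpos.ne')⟩
end

section
/- Let N ≥ 2 and λ : Fin N → ℝ with 0 ≤ λ(a) ≤ 1 for all a and ∏_a λ(a) < 1, and set λ̃(a) := λ(a)/(N−1). Then for every family J : Fin N → ℝ there exists a unique family π : Fin N → ℝ satisfying the coupled best-response system π(a) − λ̃(a) · Σ_{b ≠ a} π(b) = J(a) for every a ∈ Fin N. -/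
/-- Existence and uniqueness of the solution of the coupled best-response linear system
under the standing assumption on the concern rates. -/
theorem stmt_6 (N : ℕ) (hN : 2 ≤ N) (lam : Fin N → ℝ)
    (h0 : ∀ a, 0 ≤ lam a) (h1 : ∀ a, lam a ≤ 1) (hprod : ∏ a, lam a < 1)
    (J : Fin N → ℝ) :
    ∃! π : Fin N → ℝ, ∀ a : Fin N,
      π a - (lam a / ((N : ℝ) - 1)) * ∑ b ∈ Finset.univ.erase a, π b = J a := by
  have hNR : (2 : ℝ) ≤ (N : ℝ) := by exact_mod_cast hN
  set t : Fin N → ℝ := fun a => lam a / ((N : ℝ) - 1) with ht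
  have hNm1 : (0 : ℝ) < (N : ℝ) - 1 := by linarith
  have hNpos : (0 : ℝ) < (N : ℝ) := by linarith
  have htnn : ∀ a, 0 ≤ t a := fun a => div_nonneg (h0 a) hNm1.le
  have hden : ∀ a, (0 : ℝ) < 1 + t a := fun a => by linarith [htnn a]
  have hne : ∀ a, (1 : ℝ) + t a ≠ 0 := fun a => (hden a).ne'
  have hkey : ∀ a, t a * ((N : ℝ) - 1) = lam a := by
    intro a
    simp only [ht]
    field_simp
  -- each fraction is ≤ 1/N
  have hfle : ∀ a, t a / (1 + t a) ≤ 1 / N := by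
    intro a
    rw [div_le_div_iff₀ (hden a) hNpos]
    nlinarith [hkey a, h1 a]
  -- some lam a < 1
  obtain ⟨a0, ha0⟩ : ∃ a, lam a < 1 := by
    by_contra hcon
    push_neg at hcon
    have : (1 : ℝ) ≤ ∏ a, lam a := by
      calc (1 : ℝ) = ∏ _a : Fin N, (1 : ℝ) := by simp
        _ ≤ ∏ a, lam a :=
            Finset.prod_le_prod (fun a _ => zero_le_one) (fun a _ => hcon a)
    linarith
  have hflt : t a0 / (1 + t a0) < 1 / N := by
    rw [div_lt_div_iff₀ (hden a0) hNpos]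
    nlinarith [hkey a0]
  have hsumlt : (∑ a, t a / (1 + t a)) < 1 := by
    have h := Finset.sum_lt_sum (fun i (_ : i ∈ Finset.univ) => hfle i)
      ⟨a0, Finset.mem_univ a0, hflt⟩
    have heq : (∑ _a : Fin N, (1 / N : ℝ)) = 1 := by
      rw [Finset.sum_const, Finset.card_univ, Fintype.card_fin, nsmul_eq_mul]
      field_simp
    linarith
  set c : ℝ := 1 - ∑ a, t a / (1 + t a) with hc
  have hcpos : 0 < c := by rw [hc]; linarith
  set S : ℝ := (∑ a, J a / (1 + t a)) / c with hS
  have hSc : S * c = ∑ a, J a / (1 + t a) := div_mul_cancel₀ _ hcpos.ne'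
  set π : Fin N → ℝ := fun a => (J a + t a * S) / (1 + t a) with hπ
  have hπmul : ∀ a, π a * (1 + t a) = J a + t a * S := fun a =>
    div_mul_cancel₀ _ (hne a)
  have hsumπ : ∑ a, π a = S := by
    have h1' : ∑ a, π a = ∑ a, (J a / (1 + t a) + S * (t a / (1 + t a))) := by
      refine Finset.sum_congr rfl fun a _ => ?_
      rw [hπ]
      field_simp
    rw [h1', Finset.sum_add_distrib, ← Finset.mul_sum, ← hSc]
    have : (∑ a, t a / (1 + t a)) = 1 - c := by rw [hc]; ring
    rw [this]
    ring
  -- a general fact: any solution equals π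
  have huniq : ∀ y : Fin N → ℝ,
      (∀ a : Fin N, y a - t a * ∑ b ∈ Finset.univ.erase a, y b = J a) → y = π := by
    intro y hy
    set T : ℝ := ∑ b, y b with hT
    have hy' : ∀ a, y a * (1 + t a) = J a + t a * T := by
      intro a
      have herase : (∑ b ∈ Finset.univ.erase a, y b) = T - y a := by
        rw [hT, Finset.sum_erase_eq_sub (Finset.mem_univ a)]
      have := hy a
      rw [herase] at this
      ring_nf
      ring_nf at this
      linarith
    have hy'' : ∀ a, y a = (J a + t a * T) / (1 + t a) := by
      intro a
      rw [eq_div_iff (hne a)]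
      exact hy' a
    have hTsum : T = ∑ a, J a / (1 + t a) + T * ∑ a, t a / (1 + t a) := by
      calc T = ∑ a, y a := hT
        _ = ∑ a, (J a / (1 + t a) + T * (t a / (1 + t a))) := by
            refine Finset.sum_congr rfl fun a _ => ?_
            rw [hy'' a]
            field_simp
        _ = ∑ a, J a / (1 + t a) + T * ∑ a, t a / (1 + t a) := by
            rw [Finset.sum_add_distrib, ← Finset.mul_sum]
    have hTc : T * c = ∑ a, J a / (1 + t a) := by
      have hcx : T * c = T - T * ∑ a, t a / (1 + t a) := by rw [hc]; ring
      linarith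
    have hTS : T = S := by
      rw [hS, eq_div_iff hcpos.ne']
      exact hTc
    funext a
    rw [hy'' a, hTS, hπ]
  refine ⟨π, ?_, huniq⟩
  intro a
  have herase : (∑ b ∈ Finset.univ.erase a, π b) = S - π a := by
    rw [← hsumπ, Finset.sum_erase_eq_sub (Finset.mem_univ a)]
  rw [herase]
  have := hπmul a
  nlinarith [hπmul a]
end

section
/- Let 𝔸 be a nonempty finite index set, w : 𝔸 → ℝ with w(a) > 0 for every a, and for each a ∈ 𝔸 let g^a : ℝ² → ℝ be strictly convex and differentiable. Let z ∈ ℝ² and let (z^a)_{a∈𝔸} be a family in ℝ² with Σ_{a∈𝔸} w(a)·z^a = z. Then (z^a) attains the infimum g^w(z) = inf { Σ_a w(a)·g^a(y^a) : Σ_a w(a)·y^a = z } — i.e. Σ_a w(a)·g^a(z^a) ≤ Σ_a w(a)·g^a(y^a) for every family (y^a) with Σ_a w(a)·y^a = z — if and only if there exists ϑ ∈ ℝ² such that ∇g^a(z^a) = −ϑ for all a ∈ 𝔸. -/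
open scoped RealInnerProductSpace

/-- Derivative of `g` along a line. -/
lemma line_hasDerivAt (g : EuclideanSpace ℝ (Fin 2) → ℝ) (hdiff : Differentiable ℝ g)
    (x v : EuclideanSpace ℝ (Fin 2)) (r t : ℝ) :
    HasDerivAt (fun s : ℝ => g (x + (s * r) • v))
      (r * ⟪gradient g (x + (t * r) • v), v⟫) t := by
  have hline : HasDerivAt (fun s : ℝ => x + (s * r) • v) (r • v) t := by
    have h1 : HasDerivAt (fun s : ℝ => s * r) r t := by
      simpa using (hasDerivAt_id t).mul_const r
    simpa using (h1.smul_const v).const_add x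
  have hg := (hdiff (x + (t * r) • v)).hasGradientAt.hasFDerivAt
  have := hg.comp_hasDerivAt t hline
  simpa [InnerProductSpace.toDual_apply_apply, real_inner_smul_right, Function.comp_def] using this

/-- Gradient inequality for a differentiable convex function. -/
lemma grad_ineq (g : EuclideanSpace ℝ (Fin 2) → ℝ) (hconv : ConvexOn ℝ Set.univ g)
    (hdiff : Differentiable ℝ g) (x y : EuclideanSpace ℝ (Fin 2)) :
    g x + ⟪gradient g x, y - x⟫ ≤ g y := by
  set φ : ℝ → ℝ := fun t => g (x + t • (y - x)) with hφ
  have hφconv : ConvexOn ℝ Set.univ φ := by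
    have h := hconv.comp_affineMap (AffineMap.lineMap x y : ℝ →ᵃ[ℝ] EuclideanSpace ℝ (Fin 2))
    rw [Set.preimage_univ] at h
    have hfun : φ = g ∘ (AffineMap.lineMap x y : ℝ →ᵃ[ℝ] EuclideanSpace ℝ (Fin 2)) := by
      funext t
      simp [hφ, AffineMap.lineMap_apply, Function.comp, add_comm]
    rw [hfun]; exact h
  have hd : HasDerivAt φ ⟪gradient g x, y - x⟫ 0 := by
    have h := line_hasDerivAt g hdiff x (y - x) 1 0
    simp only [mul_one, one_mul, zero_smul, add_zero] at h
    exact h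
  have hslope := hφconv.le_slope_of_hasDerivAt (Set.mem_univ (0:ℝ)) (Set.mem_univ 1)
    one_pos hd
  have h0 : φ 0 = g x := by simp [hφ]
  have h1 : φ 1 = g y := by simp [hφ]
  rw [slope_def_field, h0, h1, show (1:ℝ) - 0 = 1 by norm_num, div_one] at hslope
  linarith

/-- Lagrange-multiplier characterization of the minimizers in the weighted-dilated
infimal convolution: a feasible family attains the infimum iff all the gradients
`∇g^a(z^a)` coincide with a common value `-ϑ`. -/
theorem stmt_7 {A : Type*} [Fintype A] [Nonempty A]
    (w : A → ℝ) (hw : ∀ a, 0 < w a)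
    (g : A → EuclideanSpace ℝ (Fin 2) → ℝ)
    (hconv : ∀ a, StrictConvexOn ℝ Set.univ (g a))
    (hdiff : ∀ a, Differentiable ℝ (g a))
    (z : EuclideanSpace ℝ (Fin 2)) (za : A → EuclideanSpace ℝ (Fin 2))
    (hsum : (∑ a, w a • za a) = z) :
    (∀ ya : A → EuclideanSpace ℝ (Fin 2), (∑ a, w a • ya a) = z →
        ∑ a, w a * g a (za a) ≤ ∑ a, w a * g a (ya a)) ↔
      ∃ ϑ : EuclideanSpace ℝ (Fin 2), ∀ a, gradient (g a) (za a) = -ϑ := by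
  classical
  constructor
  · -- forward: minimality implies equal gradients
    intro hmin
    obtain ⟨a0⟩ := (inferInstance : Nonempty A)
    refine ⟨-(gradient (g a0) (za a0)), fun a => ?_⟩
    rw [neg_neg]
    by_cases ha : a = a0
    · rw [ha]
    -- show inner products with every v agree
    have key : ∀ v : EuclideanSpace ℝ (Fin 2),
        ⟪gradient (g a) (za a) - gradient (g a0) (za a0), v⟫ = 0 := by
      intro v
      set κ : A → ℝ := fun c => (if c = a then (w a)⁻¹ else 0) - (if c = a0 then (w a0)⁻¹ else 0)
        with hκ
      set y : ℝ → A → EuclideanSpace ℝ (Fin 2) := fun t c => za c + (t * κ c) • v with hy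
      have hconstraint : ∀ t : ℝ, (∑ c, w c • y t c) = z := by
        intro t
        have hsplit : (∑ c, w c • y t c) = (∑ c, w c • za c) + (∑ c, (w c * (t * κ c)) • v) := by
          simp [hy, smul_add, Finset.sum_add_distrib, smul_smul]
        rw [hsplit, hsum, ← Finset.sum_smul]
        have hzero : (∑ c, w c * (t * κ c)) = 0 := by
          have hpt : ∀ c, w c * (t * κ c) =
              (if c = a then t * (w c * (w a)⁻¹) else 0) -
              (if c = a0 then t * (w c * (w a0)⁻¹) else 0) := by
            intro c
            rcases eq_or_ne c a with rfl | h1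
            · have h2 : c ≠ a0 := ha
              simp [hκ, h2]
              try ring
            · rcases eq_or_ne c a0 with rfl | h2
              · simp [hκ, h1]
                try ring
              · simp [hκ, h1, h2]
          rw [Finset.sum_congr rfl (fun c _ => hpt c), Finset.sum_sub_distrib,
            Finset.sum_ite_eq' Finset.univ a, Finset.sum_ite_eq' Finset.univ a0]
          simp [mul_inv_cancel₀ (hw a).ne', mul_inv_cancel₀ (hw a0).ne']
        rw [hzero, zero_smul, add_zero]
      set f : ℝ → ℝ := fun t => ∑ c, w c * g c (y t c) with hf
      have hf0 : f 0 = ∑ c, w c * g c (za c) := by simp [hf, hy]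
      have hlocmin : IsLocalMin f 0 := by
        apply Filter.Eventually.of_forall
        intro t
        rw [hf0]
        exact hmin (y t) (hconstraint t)
      have hderiv : HasDerivAt f (∑ c, w c * (κ c * ⟪gradient (g c) (za c), v⟫)) 0 := by
        apply HasDerivAt.fun_sum
        intro c _
        have h := (line_hasDerivAt (g c) (hdiff c) (za c) v (κ c) 0).const_mul (w c)
        simpa [hy] using h
      have hD := hlocmin.hasDerivAt_eq_zero hderiv
      have hsum' : (∑ c, w c * (κ c * ⟪gradient (g c) (za c), v⟫)) =
          ⟪gradient (g a) (za a), v⟫ - ⟪gradient (g a0) (za a0), v⟫ := by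
        have hpt : ∀ c, w c * (κ c * ⟪gradient (g c) (za c), v⟫) =
            (if c = a then w c * (w a)⁻¹ * ⟪gradient (g c) (za c), v⟫ else 0) -
            (if c = a0 then w c * (w a0)⁻¹ * ⟪gradient (g c) (za c), v⟫ else 0) := by
          intro c
          rcases eq_or_ne c a with rfl | h1
          · have h2 : c ≠ a0 := ha
            simp [hκ, h2]
            try ring
          · rcases eq_or_ne c a0 with rfl | h2
            · simp [hκ, h1]
              try ring
            · simp [hκ, h1, h2]
        rw [Finset.sum_congr rfl (fun c _ => hpt c), Finset.sum_sub_distrib,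
          Finset.sum_ite_eq' Finset.univ a, Finset.sum_ite_eq' Finset.univ a0]
        simp [mul_inv_cancel₀ (hw a).ne', mul_inv_cancel₀ (hw a0).ne']
      rw [hsum'] at hD
      rw [inner_sub_left]
      linarith
    have hk := key (gradient (g a) (za a) - gradient (g a0) (za a0))
    rw [real_inner_self_eq_norm_sq] at hk
    have hnorm : ‖gradient (g a) (za a) - gradient (g a0) (za a0)‖ = 0 := by
      nlinarith [norm_nonneg (gradient (g a) (za a) - gradient (g a0) (za a0))]
    rw [norm_eq_zero, sub_eq_zero] at hnorm
    exact hnorm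
  · -- backward: equal gradients imply minimality
    rintro ⟨ϑ, hϑ⟩ ya hya
    have key : ∀ a, w a * g a (za a) + ⟪-ϑ, w a • ya a - w a • za a⟫ ≤ w a * g a (ya a) := by
      intro a
      have h := grad_ineq (g a) (hconv a).convexOn (hdiff a) (za a) (ya a)
      rw [hϑ a] at h
      have h2 : w a * (g a (za a) + ⟪-ϑ, ya a - za a⟫) ≤ w a * g a (ya a) :=
        mul_le_mul_of_nonneg_left h (hw a).le
      calc w a * g a (za a) + ⟪-ϑ, w a • ya a - w a • za a⟫
          = w a * (g a (za a) + ⟪-ϑ, ya a - za a⟫) := by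
            rw [← smul_sub, real_inner_smul_right]; ring
        _ ≤ w a * g a (ya a) := h2
    calc ∑ a, w a * g a (za a)
        = ∑ a, (w a * g a (za a) + ⟪-ϑ, w a • ya a - w a • za a⟫) := by
          have hz : (∑ i, (w i • ya i - w i • za i)) = 0 := by
            rw [Finset.sum_sub_distrib, hya, hsum, sub_self]
          rw [Finset.sum_add_distrib, ← inner_sum, hz, inner_zero_right, add_zero]
      _ ≤ ∑ a, w a * g a (ya a) := Finset.sum_le_sum (fun a _ => key a)
end

section
/- Let 𝔸 be a nonempty finite index set, w : 𝔸 → ℝ with w(a) > 0 for every a and Σ_{a∈𝔸} w(a) = 1, and for each a ∈ 𝔸 let g^a : ℝ² → ℝ be convex, differentiable and bounded below (so that g^w(z) := inf { Σ_a w(a)·g^a(z^a) : Σ_a w(a)·z^a = z } is finite for every z). Let z ∈ ℝ², let (z^a) be a family with Σ_a w(a)·z^a = z, and suppose there exists ϑ ∈ ℝ² with ∇g^a(z^a) = −ϑ for all a. Then g^w(z) = Σ_a w(a)·g^a(z^a), and g^w is differentiable at z with gradient ∇g^w(z) = −ϑ. -/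
open Filter Topology Asymptotics InnerProductSpace
local notation "⟪" x ", " y "⟫" => @inner ℝ _ _ x y

/-- Subgradient inequality for a convex differentiable function. -/
lemma convex_grad_ineq {F : Type*} [NormedAddCommGroup F] [InnerProductSpace ℝ F]
    [CompleteSpace F] {f : F → ℝ} {G x : F}
    (hf : ConvexOn ℝ Set.univ f) (hG : HasGradientAt f G x) (y : F) :
    f x + ⟪G, y - x⟫ ≤ f y := by
  have hphi : ConvexOn ℝ Set.univ (f ∘ (AffineMap.lineMap x y : ℝ →ᵃ[ℝ] F)) := by
    simpa using hf.comp_affineMap (AffineMap.lineMap x y)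
  have hline : HasDerivAt (fun t : ℝ => (AffineMap.lineMap x y : ℝ →ᵃ[ℝ] F) t) (y - x) 0 := by
    simp only [AffineMap.lineMap_apply_module]
    have h1 : HasDerivAt (fun t : ℝ => (1 - t) • x) (-x) 0 := by
      simpa using ((hasDerivAt_const (0:ℝ) (1:ℝ)).sub (hasDerivAt_id (0:ℝ))).smul_const x
    have h2 : HasDerivAt (fun t : ℝ => t • y) y 0 := by
      simpa using (hasDerivAt_id (0:ℝ)).smul_const y
    have := h1.add h2
    rw [show -x + y = y - x by abel] at this
    exact this
  have hfd : HasFDerivAt f (InnerProductSpace.toDual ℝ F G : F →L[ℝ] ℝ) x :=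
    hG
  have hfd' : HasFDerivAt f (InnerProductSpace.toDual ℝ F G : F →L[ℝ] ℝ)
      ((AffineMap.lineMap x y : ℝ →ᵃ[ℝ] F) (0:ℝ)) := by
    simpa using hfd
  have hcomp : HasDerivAt (f ∘ (AffineMap.lineMap x y : ℝ →ᵃ[ℝ] F)) ⟪G, y - x⟫ 0 := by
    simpa [InnerProductSpace.toDual_apply_apply] using hfd'.comp_hasDerivAt 0 hline
  have hslope := hphi.le_slope_of_hasDerivAt (Set.mem_univ (0:ℝ)) (Set.mem_univ (1:ℝ))
    zero_lt_one hcomp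
  have : slope (f ∘ (AffineMap.lineMap x y : ℝ →ᵃ[ℝ] F)) 0 1 = f y - f x := by
    simp [slope, Function.comp]
  rw [this] at hslope
  linarith

/-- If a feasible family has all gradients equal to `-ϑ`, then it attains the
weighted-dilated infimal convolution and `g^w` has gradient `-ϑ` at `z`. -/
theorem stmt_9 {A : Type*} [Fintype A] [Nonempty A]
    (w : A → ℝ) (hw : ∀ a, 0 < w a) (hw1 : (∑ a, w a) = 1)
    (g : A → EuclideanSpace ℝ (Fin 2) → ℝ)
    (hconv : ∀ a, ConvexOn ℝ Set.univ (g a))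
    (hdiff : ∀ a, Differentiable ℝ (g a))
    (hbdd : ∀ a, BddBelow (Set.range (g a)))
    (gw : EuclideanSpace ℝ (Fin 2) → ℝ)
    (hgw : ∀ z, gw z = sInf { r : ℝ | ∃ za : A → EuclideanSpace ℝ (Fin 2),
        (∑ a, w a • za a) = z ∧ r = ∑ a, w a * g a (za a) })
    (z : EuclideanSpace ℝ (Fin 2)) (za : A → EuclideanSpace ℝ (Fin 2))
    (hsum : (∑ a, w a • za a) = z)
    (ϑ : EuclideanSpace ℝ (Fin 2)) (hgrad : ∀ a, gradient (g a) (za a) = -ϑ) :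
    gw z = ∑ a, w a * g a (za a) ∧ HasGradientAt gw (-ϑ) z := by
  set V : ℝ := ∑ a, w a * g a (za a) with hV
  have hG : ∀ a, HasGradientAt (g a) (-ϑ) (za a) := fun a =>
    hgrad a ▸ (hdiff a (za a)).hasGradientAt
  -- subgradient inequality summed
  have key : ∀ (z' : EuclideanSpace ℝ (Fin 2)) (ya : A → EuclideanSpace ℝ (Fin 2)),
      (∑ a, w a • ya a) = z' → V + ⟪-ϑ, z' - z⟫ ≤ ∑ a, w a * g a (ya a) := by
    intro z' ya hy
    have h1 : ∀ a, w a * (g a (za a) + ⟪-ϑ, ya a - za a⟫) ≤ w a * g a (ya a) := fun a =>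
      mul_le_mul_of_nonneg_left (convex_grad_ineq (hconv a) (hG a) (ya a)) (hw a).le
    have h2 : (∑ a, w a * (g a (za a) + ⟪-ϑ, ya a - za a⟫)) ≤ ∑ a, w a * g a (ya a) :=
      Finset.sum_le_sum fun a _ => h1 a
    have h3 : (∑ a, w a * (g a (za a) + ⟪-ϑ, ya a - za a⟫))
        = V + ⟪-ϑ, z' - z⟫ := by
      rw [hV]
      have : ∀ a ∈ Finset.univ, w a * (g a (za a) + ⟪-ϑ, ya a - za a⟫)
          = w a * g a (za a) + ⟪-ϑ, w a • (ya a - za a)⟫ := by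
        intro a _
        rw [real_inner_smul_right]; ring
      rw [Finset.sum_congr rfl this, Finset.sum_add_distrib, ← inner_sum]
      congr 2
      rw [← hy, ← hsum]
      simp [smul_sub, Finset.sum_sub_distrib]
    linarith [h3 ▸ h2]
  -- the admissible set at z' and its properties
  set S : EuclideanSpace ℝ (Fin 2) → Set ℝ := fun z' =>
    { r : ℝ | ∃ ya : A → EuclideanSpace ℝ (Fin 2),
        (∑ a, w a • ya a) = z' ∧ r = ∑ a, w a * g a (ya a) } with hS
  have hmem : ∀ z', (∑ a, w a * g a (za a + (z' - z))) ∈ S z' := by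
    intro z'
    refine ⟨fun a => za a + (z' - z), ?_, rfl⟩
    rw [Finset.sum_congr rfl (fun a _ => smul_add (w a) (za a) (z' - z)),
      Finset.sum_add_distrib, hsum, ← Finset.sum_smul, hw1, one_smul]
    abel
  have hlb : ∀ z', ∀ r ∈ S z', V + ⟪-ϑ, z' - z⟫ ≤ r := by
    rintro z' r ⟨ya, hy, rfl⟩
    exact key z' ya hy
  have hbddS : ∀ z', BddBelow (S z') := fun z' => ⟨_, hlb z'⟩
  have hupper : ∀ z', gw z' ≤ ∑ a, w a * g a (za a + (z' - z)) := by
    intro z'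
    rw [hgw z']
    exact csInf_le (hbddS z') (hmem z')
  have hlower : ∀ z', V + ⟪-ϑ, z' - z⟫ ≤ gw z' := by
    intro z'
    rw [hgw z']
    exact le_csInf ⟨_, hmem z'⟩ (hlb z')
  have hval : gw z = V := by
    refine le_antisymm ?_ ?_
    · have := hupper z
      simpa using this
    · have := hlower z
      simpa using this
  refine ⟨hval, ?_⟩
  rw [hasGradientAt_iff_isLittleO]
  -- error functions
  have hE : ∀ a : A, (fun z' : EuclideanSpace ℝ (Fin 2) =>
      g a (za a + (z' - z)) - g a (za a) - ⟪-ϑ, z' - z⟫) =o[𝓝 z] fun z' => z' - z := by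
    intro a
    have h1 := (hasGradientAt_iff_isLittleO.mp (hG a))
    have ht : Filter.Tendsto (fun z' : EuclideanSpace ℝ (Fin 2) => za a + (z' - z)) (𝓝 z)
        (𝓝 (za a)) := by
      have : Continuous (fun z' : EuclideanSpace ℝ (Fin 2) => za a + (z' - z)) :=
        continuous_const.add (continuous_id.sub continuous_const)
      exact this.tendsto' z (za a) (by rw [sub_self, add_zero])
    have h2 := h1.comp_tendsto ht
    simpa only [Function.comp_def, add_sub_cancel_left] using h2
  have hEsum : (fun z' : EuclideanSpace ℝ (Fin 2) =>
      ∑ a, w a * (g a (za a + (z' - z)) - g a (za a) - ⟪-ϑ, z' - z⟫))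
      =o[𝓝 z] fun z' => z' - z := by
    have := Asymptotics.IsLittleO.sum (s := (Finset.univ : Finset A))
      (A := fun a (z' : EuclideanSpace ℝ (Fin 2)) =>
        w a * (g a (za a + (z' - z)) - g a (za a) - ⟪-ϑ, z' - z⟫))
      (g' := fun z' => z' - z) (l := 𝓝 z)
      (fun a _ => (hE a).const_mul_left (w a))
    simpa [Finset.sum_fn] using this
  -- squeeze
  refine (Asymptotics.isBigO_of_le (𝓝 z) ?_).trans_isLittleO hEsum
  intro z'
  have hFnn : 0 ≤ gw z' - gw z - ⟪-ϑ, z' - z⟫ := by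
    have := hlower z'
    rw [hval]; linarith
  have hFle : gw z' - gw z - ⟪-ϑ, z' - z⟫
      ≤ ∑ a, w a * (g a (za a + (z' - z)) - g a (za a) - ⟪-ϑ, z' - z⟫) := by
    have h1 := hupper z'
    have h2 : (∑ a, w a * (g a (za a + (z' - z)) - g a (za a) - ⟪-ϑ, z' - z⟫))
        = (∑ a, w a * g a (za a + (z' - z))) - V - ⟪-ϑ, z' - z⟫ := by
      rw [hV]
      simp only [mul_sub]
      rw [Finset.sum_sub_distrib, Finset.sum_sub_distrib, ← Finset.sum_mul, hw1, one_mul]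
    rw [h2, hval]
    linarith
  rw [Real.norm_of_nonneg hFnn]
  exact hFle.trans (le_abs_self _)
end
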